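/- If s ∉ ℤ and r - s ∉ ℤ, then the sl₂-module E_{r,s} is irreducible: every nonzero subspace of E_{r,s} invariant under the operators e, f, h equals all of E_{r,s}. -/
import Mathlib

open Finsupp

/-- The operator `e` on `E_{r,s}`: `e · E_i = -(s+i) E_{i-1}`. -/
noncomputable def eOp (s : ℂ) : (ℤ →₀ ℂ) →ₗ[ℂ] (ℤ →₀ ℂ) :=
  Finsupp.lsum ℂ (fun i => (-(s + (i : ℂ))) • Finsupp.lsingle (i - 1))

/-- The operator `f` on `E_{r,s}`: `f · E_i = (s+i-r) E_{i+1}`. -/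
noncomputable def fOp (r s : ℂ) : (ℤ →₀ ℂ) →ₗ[ℂ] (ℤ →₀ ℂ) :=
  Finsupp.lsum ℂ (fun i => ((s + (i : ℂ) - r)) • Finsupp.lsingle (i + 1))

/-- The operator `h` on `E_{r,s}`: `h · E_i = (-2s-2i+r) E_i`. -/
noncomputable def hOp (r s : ℂ) : (ℤ →₀ ℂ) →ₗ[ℂ] (ℤ →₀ ℂ) :=
  Finsupp.lsum ℂ (fun i => ((-2*s - 2*(i : ℂ) + r)) • Finsupp.lsingle i)

/-- The basis vector `E_i`. -/
noncomputable def Evec (i : ℤ) : ℤ →₀ ℂ := Finsupp.single i 1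

lemma hOp_apply (r s : ℂ) (v : ℤ →₀ ℂ) (k : ℤ) :
    hOp r s v k = (-2*s - 2*(k : ℂ) + r) * v k := by
  classical
  simp only [hOp, Finsupp.lsum_apply, Finsupp.sum, Finset.sum_apply',
    LinearMap.smul_apply, Finsupp.lsingle_apply, Finsupp.smul_apply,
    Finsupp.single_apply, smul_eq_mul, mul_ite, mul_zero]
  rw [Finset.sum_ite_eq' v.support k]
  split_ifs with h
  · rfl
  · rw [Finsupp.notMem_support_iff.mp h, mul_zero]

lemma eOp_Evec (s : ℂ) (i : ℤ) : eOp s (Evec i) = (-(s + (i:ℂ))) • Evec (i-1) := by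
  rw [eOp, Evec, Finsupp.lsum_single, LinearMap.smul_apply, Finsupp.lsingle_apply]
  rfl

lemma fOp_Evec (r s : ℂ) (i : ℤ) : fOp r s (Evec i) = (s + (i:ℂ) - r) • Evec (i+1) := by
  rw [fOp, Evec, Finsupp.lsum_single, LinearMap.smul_apply, Finsupp.lsingle_apply]
  rfl

/-- From a nonzero element of an `h`-invariant subspace, extract some basis vector. -/
lemma exists_Evec_mem (r s : ℂ) (p : Submodule ℂ (ℤ →₀ ℂ))
    (hph : ∀ v ∈ p, hOp r s v ∈ p) :
    ∀ n : ℕ, ∀ v : ℤ →₀ ℂ, v.support.card = n → v ∈ p → v ≠ 0 → ∃ i, Evec i ∈ p := by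
  intro n
  induction n using Nat.strong_induction_on with
  | _ n ih =>
    intro v hcard hvp hv0
    obtain ⟨i, hi⟩ := Finsupp.support_nonempty_iff.mpr hv0
    by_cases hsing : v.support ⊆ {i}
    · -- v = (v i) • Evec i
      have hvi : v i ≠ 0 := Finsupp.mem_support_iff.mp hi
      have key : (v i)⁻¹ • v = Evec i := by
        ext k
        rcases eq_or_ne k i with rfl | hk
        · simp [Evec, inv_mul_cancel₀ hvi]
        · have : k ∉ v.support := fun hk' => hk (Finset.mem_singleton.mp (hsing hk'))
          simp [Evec, Finsupp.notMem_support_iff.mp this, Finsupp.single_apply,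
            (Ne.symm hk)]
      refine ⟨i, ?_⟩
      rw [← key]
      exact p.smul_mem _ hvp
    · -- there is j ∈ support, j ≠ i; kill the j component
      obtain ⟨j, hj, hji⟩ : ∃ j ∈ v.support, j ≠ i := by
        by_contra h
        push_neg at h
        exact hsing fun x hx => Finset.mem_singleton.mpr (h x hx)
      set w : ℤ →₀ ℂ := hOp r s v - (-2*s - 2*(j:ℂ) + r) • v with hw
      have hwp : w ∈ p := p.sub_mem (hph v hvp) (p.smul_mem _ hvp)
      have hwk : ∀ k, w k = ((-2*s - 2*(k:ℂ) + r) - (-2*s - 2*(j:ℂ) + r)) * v k := by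
        intro k
        rw [hw, Finsupp.sub_apply, Finsupp.smul_apply, hOp_apply, smul_eq_mul]
        ring
      have hwi : w i ≠ 0 := by
        rw [hwk]
        have h1 : (-2*s - 2*(i:ℂ) + r) - (-2*s - 2*(j:ℂ) + r) ≠ 0 := by
          intro h
          apply hji
          have : (j : ℂ) = (i : ℂ) := by linear_combination h/2
          exact_mod_cast this
        exact mul_ne_zero h1 (Finsupp.mem_support_iff.mp hi)
      have hw0 : w ≠ 0 := fun h => hwi (by rw [h]; rfl)
      have hsub : w.support ⊆ v.support \ {j} := by
        intro k hk
        rw [Finset.mem_sdiff, Finset.mem_singleton]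
        constructor
        · by_contra h
          exact Finsupp.mem_support_iff.mp hk (by rw [hwk, Finsupp.notMem_support_iff.mp h, mul_zero])
        · rintro rfl
          exact Finsupp.mem_support_iff.mp hk (by rw [hwk]; ring_nf)
      have hlt : w.support.card < n := by
        rw [← hcard]
        calc w.support.card ≤ (v.support \ {j}).card := Finset.card_le_card hsub
          _ < v.support.card := Finset.card_lt_card (Finset.sdiff_ssubset
              (Finset.singleton_subset_iff.mpr hj) (Finset.singleton_nonempty j))
      exact ih _ hlt w rfl hwp hw0

theorem E_irreducible (r s : ℂ) (hs : ∀ z : ℤ, s ≠ (z : ℂ))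
    (hrs : ∀ z : ℤ, r - s ≠ (z : ℂ)) :
    ∀ p : Submodule ℂ (ℤ →₀ ℂ),
      (∀ v ∈ p, eOp s v ∈ p ∧ fOp r s v ∈ p ∧ hOp r s v ∈ p) →
      p ≠ ⊥ → p = ⊤ := by
  intro p hinv hne
  -- get some Evec i ∈ p
  obtain ⟨v, hvp, hv0⟩ : ∃ v ∈ p, v ≠ 0 := by
    by_contra h
    push_neg at h
    exact hne ((Submodule.eq_bot_iff p).mpr h)
  obtain ⟨i, hip⟩ := exists_Evec_mem r s p (fun v hv => (hinv v hv).2.2) _ v rfl hvp hv0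
  -- step up and down
  have hup : ∀ j : ℤ, Evec j ∈ p → Evec (j+1) ∈ p := by
    intro j hj
    have hc : s + (j:ℂ) - r ≠ 0 := by
      intro h
      exact hrs j (by linear_combination -h)
    have h1 : fOp r s (Evec j) ∈ p := (hinv _ hj).2.1
    rw [fOp_Evec] at h1
    have := p.smul_mem (s + (j:ℂ) - r)⁻¹ h1
    rwa [smul_smul, inv_mul_cancel₀ hc, one_smul] at this
  have hdown : ∀ j : ℤ, Evec j ∈ p → Evec (j-1) ∈ p := by
    intro j hj
    have hc : -(s + (j:ℂ)) ≠ 0 := by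
      intro h
      exact hs (-j) (by push_cast; linear_combination -h)
    have h1 : eOp s (Evec j) ∈ p := (hinv _ hj).1
    rw [eOp_Evec] at h1
    have := p.smul_mem (-(s + (j:ℂ)))⁻¹ h1
    rwa [smul_smul, inv_mul_cancel₀ hc, one_smul] at this
  have hall : ∀ j : ℤ, Evec j ∈ p := by
    have hup' : ∀ n : ℕ, Evec (i + n) ∈ p := by
      intro n
      induction n with
      | zero => simpa using hip
      | succ m ihm => have := hup _ ihm; rwa [show i + (m:ℤ) + 1 = i + (m+1 : ℕ) by push_cast; ring] at this
    have hdown' : ∀ n : ℕ, Evec (i - n) ∈ p := by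
      intro n
      induction n with
      | zero => simpa using hip
      | succ m ihm => have := hdown _ ihm; rwa [show i - (m:ℤ) - 1 = i - (m+1 : ℕ) by push_cast; ring] at this
    intro j
    rcases le_or_gt i j with h | h
    · have := hup' (j - i).toNat
      rwa [show i + ((j - i).toNat : ℤ) = j by rw [Int.toNat_of_nonneg (by omega)]; ring] at this
    · have := hdown' (i - j).toNat
      rwa [show i - ((i - j).toNat : ℤ) = j by rw [Int.toNat_of_nonneg (by omega)]; ring] at this
  -- conclude
  rw [eq_top_iff]
  intro v _
  have : v = v.sum (fun i c => c • Evec i) := by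
    conv_lhs => rw [← Finsupp.sum_single v]
    apply Finsupp.sum_congr
    intro k _
    rw [Evec, Finsupp.smul_single', mul_one]
  rw [this]
  exact Submodule.sum_mem p (fun k _ => p.smul_mem _ (hall k))
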